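/- Let H be a real Hilbert space, φ : H → ℝ a convex lower semicontinuous function with φ(y) ≥ φ(0) = 0 for all y ∈ H, and ε, ε' > 0. Then for all u, v ∈ H, ⟨(1/ε)·Dφ_ε(u) − (1/ε')·Dφ_{ε'}(v), u − v⟩ ≥ −(1/ε + 1/ε')·‖Dφ_ε(u)‖·‖Dφ_{ε'}(v)‖, where Dφ_ε(u) = u − J_ε(u). -/

import Mathlib

open RealInnerProductSpace

/-- Key variational inequality for the proximal map. -/
lemma prox_key {H : Type*} [NormedAddCommGroup H] [InnerProductSpace ℝ H]
    (φ : H → ℝ) (hconv : ConvexOn ℝ Set.univ φ)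
    (ε : ℝ) (hε : 0 < ε) (J : H → H)
    (hJ : ∀ u w : H, (1/2) * ‖u - J u‖^2 + ε * φ (J u) ≤ (1/2) * ‖u - w‖^2 + ε * φ w)
    (u w : H) : ⟪u - J u, w - J u⟫ ≤ ε * (φ w - φ (J u)) := by
  set p := J u
  set a := u - p with ha
  set d := w - p with hd
  have step : ∀ t : ℝ, 0 < t → t ≤ 1 → ⟪a, d⟫ ≤ ε * (φ w - φ p) + t * ‖d‖^2 / 2 := by
    intro t ht ht1
    have hwt : p + t • d = (1 - t) • p + t • w := by
      rw [hd]; module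
    have hc : φ (p + t • d) ≤ (1 - t) * φ p + t * φ w := by
      rw [hwt]
      exact hconv.2 (Set.mem_univ p) (Set.mem_univ w) (by linarith) ht.le (by ring)
    have h1 := hJ u (p + t • d)
    have h2 : u - (p + t • d) = a - t • d := by rw [ha, hd]; module
    rw [h2] at h1
    have h3 : ‖a - t • d‖^2 = ‖a‖^2 - 2 * ⟪a, t • d⟫ + ‖t • d‖^2 := by
      rw [@norm_sub_sq_real]
    have h4 : ⟪a, t • d⟫ = t * ⟪a, d⟫ := real_inner_smul_right a d t
    have h5 : ‖t • d‖^2 = t^2 * ‖d‖^2 := by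
      rw [norm_smul]; simp [mul_pow, abs_of_pos ht]
    rw [h3, h4, h5] at h1
    have h6 : t * ⟪a, d⟫ ≤ t * (ε * (φ w - φ p) + t * ‖d‖^2 / 2) := by nlinarith
    exact (mul_le_mul_iff_right₀ ht).mp h6
  by_contra hcon
  push_neg at hcon
  set c := ⟪a, d⟫ - ε * (φ w - φ p) with hcd
  have hcpos : 0 < c := by rw [hcd]; linarith
  set t := min 1 (c / (‖d‖^2 + 1)) with htdef
  have hdpos : (0:ℝ) < ‖d‖^2 + 1 := by positivity
  have htpos : 0 < t := lt_min one_pos (by positivity)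
  have ht1 : t ≤ 1 := min_le_left _ _
  have h := step t htpos ht1
  have htc : t ≤ c / (‖d‖^2 + 1) := min_le_right _ _
  have hlt : t * ‖d‖^2 / 2 < c := by
    have h1 : t * (‖d‖^2 + 1) ≤ c := by
      calc t * (‖d‖^2 + 1) ≤ (c / (‖d‖^2 + 1)) * (‖d‖^2 + 1) :=
            mul_le_mul_of_nonneg_right htc hdpos.le
        _ = c := by field_simp
    nlinarith
  have : ⟪a, d⟫ - ε * (φ w - φ p) ≤ t * ‖d‖^2 / 2 := by linarith
  rw [← hcd] at this
  linarith

/-- Algebraic combination lemma. -/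
lemma comb {H : Type*} [NormedAddCommGroup H] [InnerProductSpace ℝ H]
    (a b c : H) (s t D : ℝ) (hs : 0 < s) (ht : 0 < t)
    (h1 : D ≤ s * ⟪a, c⟫) (h2 : t * ⟪b, c⟫ ≤ D) :
    ⟪s • a - t • b, (a - b) + c⟫ ≥ -(s + t) * (‖a‖ * ‖b‖) := by
  have hcs : ⟪a, b⟫ ≤ ‖a‖ * ‖b‖ := real_inner_le_norm a b
  rw [inner_add_right, inner_sub_left, inner_sub_left, inner_sub_right, inner_sub_right,
    real_inner_smul_left, real_inner_smul_left, real_inner_smul_left, real_inner_smul_left,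
    real_inner_smul_left, real_inner_smul_left]
  have hsym : ⟪b, a⟫ = ⟪a, b⟫ := real_inner_comm a b
  rw [hsym]
  nlinarith [(real_inner_self_nonneg : 0 ≤ ⟪a, a⟫), (real_inner_self_nonneg : 0 ≤ ⟪b, b⟫),
    mul_le_mul_of_nonneg_left hcs hs.le, mul_le_mul_of_nonneg_left hcs ht.le]

/-- the Yosida approximations satisfy
`⟨(1/ε)Dφ_ε(u) − (1/ε')Dφ_{ε'}(v), u − v⟩ ≥ −(1/ε + 1/ε')·‖Dφ_ε(u)‖·‖Dφ_{ε'}(v)‖`. -/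
theorem stmt_9 {H : Type*} [NormedAddCommGroup H] [InnerProductSpace ℝ H] [CompleteSpace H]
    (φ : H → ℝ) (hconv : ConvexOn ℝ Set.univ φ) (hlsc : LowerSemicontinuous φ)
    (hφ0 : φ 0 = 0) (hφnn : ∀ y : H, 0 ≤ φ y)
    (ε ε' : ℝ) (hε : 0 < ε) (hε' : 0 < ε')
    (Jε Jε' : H → H)
    (hJ : ∀ u v : H, (1/2) * ‖u - Jε u‖^2 + ε * φ (Jε u) ≤ (1/2) * ‖u - v‖^2 + ε * φ v)
    (hJ' : ∀ u v : H, (1/2) * ‖u - Jε' u‖^2 + ε' * φ (Jε' u) ≤ (1/2) * ‖u - v‖^2 + ε' * φ v)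
    (u v : H) :
    ⟪(1/ε) • (u - Jε u) - (1/ε') • (v - Jε' v), u - v⟫ ≥
      -(1/ε + 1/ε') * (‖u - Jε u‖ * ‖v - Jε' v‖) := by
  have k1 := prox_key φ hconv ε hε Jε hJ u (Jε' v)
  have k2 := prox_key φ hconv ε' hε' Jε' hJ' v (Jε u)
  have k1' : ε * (φ (Jε u) - φ (Jε' v)) ≤ ⟪u - Jε u, Jε u - Jε' v⟫ := by
    have he : Jε' v - Jε u = -(Jε u - Jε' v) := by abel
    rw [he, inner_neg_right] at k1
    linarith
  have h1 : φ (Jε u) - φ (Jε' v) ≤ (1/ε) * ⟪u - Jε u, Jε u - Jε' v⟫ := by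
    rw [div_mul_eq_mul_div, one_mul, le_div_iff₀ hε]
    nlinarith
  have h2 : (1/ε') * ⟪v - Jε' v, Jε u - Jε' v⟫ ≤ φ (Jε u) - φ (Jε' v) := by
    rw [div_mul_eq_mul_div, one_mul, div_le_iff₀ hε']
    nlinarith
  have hsplit : u - v = ((u - Jε u) - (v - Jε' v)) + (Jε u - Jε' v) := by abel
  rw [hsplit]
  exact comb (u - Jε u) (v - Jε' v) (Jε u - Jε' v) (1/ε) (1/ε')
    (φ (Jε u) - φ (Jε' v)) (by positivity) (by positivity) h1 h2
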